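/- arXiv:2112.08229 — 3 statements merged into one kernel-verified Lean document; each statement's English description precedes it below -/
import Mathlib

section
/- Let F be a field and T an n×n matrix polynomial over F that is block upper triangular with respect to a partition 0 = n_0 < n_1 < ⋯ < n_s = n (i.e. T_{ij} = 0 whenever the index i lies in a later index block [n_t, n_{t+1}) than the index j), and suppose for each t the diagonal block of T on the t-th index block is strictly regular, say of degree d_t with invertible leading coefficient. Then there exists an n×n matrix polynomial T̃ over F, block upper triangular with respect to the same partition, unimodularly equivalent to T, whose diagonal blocks coincide with those of T, and such that for all t < u every entry of T̃ with row index in the t-th block and column index in the u-th block is either zero or has degree strictly less than min(d_t, d_u). -/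
open Polynomial

/-- Unimodular equivalence of square matrix polynomials. -/
def UnimodEquiv {F : Type*} [Field F] {n : ℕ}
    (P Q : Matrix (Fin n) (Fin n) F[X]) : Prop :=
  ∃ U V : Matrix (Fin n) (Fin n) F[X], IsUnit U.det ∧ IsUnit V.det ∧ Q = U * P * V

/-- The (square) block of `T` with row and column indices in `[lo, hi)`. -/
noncomputable def blockOf {F : Type*} [Field F] {n : ℕ} (T : Matrix (Fin n) (Fin n) F[X])
    (lo hi : ℕ) : Matrix (Fin (hi - lo)) (Fin (hi - lo)) F[X] :=
  Matrix.of fun a b =>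
    if h : lo + (a : ℕ) < n ∧ lo + (b : ℕ) < n then T ⟨lo + (a : ℕ), h.1⟩ ⟨lo + (b : ℕ), h.2⟩
    else 0

lemma wbLtSucc {x : WithBot ℕ} {k : ℕ} : x < ((k+1:ℕ):WithBot ℕ) ↔ x ≤ (k:ℕ) := by
  rw [Nat.cast_withBot, Nat.cast_withBot]
  cases x with
  | bot => exact iff_of_true (WithBot.bot_lt_coe (k+1)) bot_le
  | coe a =>
    rw [WithBot.coe_lt_coe, WithBot.coe_le_coe]
    exact Nat.lt_succ_iff

lemma degLtAux {F : Type*} [Field F] (p : F[X]) (k : ℕ) (h1 : p.degree ≤ (k:ℕ))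
    (h2 : p.coeff k = 0) : p.degree < (k:ℕ) := by
  rcases lt_or_eq_of_le h1 with h | h
  · exact h
  · exfalso
    have hp : p ≠ 0 := by
      intro h0; rw [h0] at h; simp at h
    have hk : p.natDegree = k := natDegree_eq_of_degree_eq_some h
    have hlc := Polynomial.leadingCoeff_ne_zero.mpr hp
    rw [Polynomial.leadingCoeff, hk, h2] at hlc
    exact hlc rfl

/-- Left division: A = S * Q + R with all entries of R of degree < d. -/
lemma matDivLeft {F : Type*} [Field F] {m p : ℕ} (d : ℕ)
    (S : Matrix (Fin m) (Fin m) F[X])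
    (hdeg : ∀ a b, (S a b).degree ≤ (d : ℕ))
    (hinv : IsUnit (Matrix.of fun a b => (S a b).coeff d).det)
    (A : Matrix (Fin m) (Fin p) F[X]) :
    ∃ Q R : Matrix (Fin m) (Fin p) F[X],
      A = S * Q + R ∧ ∀ a b, (R a b).degree < (d : ℕ) := by
  set L : Matrix (Fin m) (Fin m) F := Matrix.of fun a b => (S a b).coeff d with hL
  suffices H : ∀ N : ℕ, ∀ A : Matrix (Fin m) (Fin p) F[X],
      (∀ a b, (A a b).degree < ((d + N : ℕ) : WithBot ℕ)) →
      ∃ Q R : Matrix (Fin m) (Fin p) F[X],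
        A = S * Q + R ∧ ∀ a b, (R a b).degree < (d : ℕ) by
    refine H (1 + ∑ x, ∑ y, (A x y).natDegree) A fun a b => ?_
    have h1 : (A a b).degree ≤ (A a b).natDegree := Polynomial.degree_le_natDegree
    have h2 : (A a b).natDegree ≤ ∑ x, ∑ y, (A x y).natDegree := by
      calc (A a b).natDegree ≤ ∑ y, (A a y).natDegree :=
            Finset.single_le_sum (f := fun y => (A a y).natDegree)
              (fun _ _ => Nat.zero_le _) (Finset.mem_univ b)
        _ ≤ _ := Finset.single_le_sum (f := fun x => ∑ y, (A x y).natDegree)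
            (fun _ _ => Nat.zero_le _) (Finset.mem_univ a)
    calc (A a b).degree ≤ ((A a b).natDegree : WithBot ℕ) := h1
      _ < ((d + (1 + ∑ x, ∑ y, (A x y).natDegree) : ℕ) : WithBot ℕ) := by
          exact_mod_cast by omega
  intro N
  induction N with
  | zero =>
    intro A hA
    exact ⟨0, A, by simp, fun a b => by simpa using hA a b⟩
  | succ N ih =>
    intro A hA
    set M : Matrix (Fin m) (Fin p) F := Matrix.of fun a b => (A a b).coeff (d + N) with hM
    set Q₀ : Matrix (Fin m) (Fin p) F[X] :=
      Matrix.of fun a b => C ((L⁻¹ * M) a b) * X ^ N with hQ₀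
    have hSQdeg : ∀ a b, ((S * Q₀) a b).degree ≤ ((d + N : ℕ) : WithBot ℕ) := by
      intro a b
      rw [Matrix.mul_apply]
      refine (Polynomial.degree_sum_le _ _).trans ?_
      apply Finset.sup_le
      intro c _
      calc (S a c * Q₀ c b).degree
          ≤ (S a c).degree + (C ((L⁻¹ * M) c b) * X ^ N).degree := degree_mul_le _ _
        _ ≤ (d : WithBot ℕ) + N := by
            refine add_le_add (hdeg a c) ?_
            refine (degree_mul_le _ _).trans ?_
            calc (C ((L⁻¹ * M) c b)).degree + (X ^ N : F[X]).degree
                ≤ 0 + N := add_le_add degree_C_le (degree_X_pow_le N)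
              _ = (N : WithBot ℕ) := by simp
        _ = ((d + N : ℕ) : WithBot ℕ) := by push_cast; rfl
    have hSQcoeff : ∀ a b, ((S * Q₀) a b).coeff (d + N) = M a b := by
      intro a b
      rw [Matrix.mul_apply, Polynomial.finset_sum_coeff]
      have h1 : ∀ c : Fin m, (S a c * Q₀ c b).coeff (d + N)
          = (S a c).coeff d * (L⁻¹ * M) c b := by
        intro c
        show (S a c * (C ((L⁻¹ * M) c b) * X ^ N)).coeff (d + N) = _
        rw [← mul_assoc, Polynomial.coeff_mul_X_pow, Polynomial.coeff_mul_C]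
      rw [Finset.sum_congr rfl (fun c _ => h1 c)]
      have h2 : ∑ c, (S a c).coeff d * (L⁻¹ * M) c b = (L * (L⁻¹ * M)) a b := by
        rw [Matrix.mul_apply]; rfl
      rw [h2, ← Matrix.mul_assoc, Matrix.mul_nonsing_inv L hinv, Matrix.one_mul]
    have hdA : ∀ a b, (A a b).degree ≤ ((d + N : ℕ) : WithBot ℕ) := by
      intro a b
      have := hA a b
      rw [show d + (N+1) = (d + N) + 1 by ring] at this
      exact wbLtSucc.mp this
    obtain ⟨Q', R, hQR, hR⟩ := ih (A - S * Q₀) (fun a b => by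
      have h1 : ((A - S * Q₀) a b).degree ≤ ((d + N : ℕ) : WithBot ℕ) := by
        rw [Matrix.sub_apply]
        exact (Polynomial.degree_sub_le _ _).trans (max_le (hdA a b) (hSQdeg a b))
      have h2 : ((A - S * Q₀) a b).coeff (d + N) = 0 := by
        rw [Matrix.sub_apply, Polynomial.coeff_sub, hSQcoeff a b, hM]
        simp [Matrix.of_apply]
      exact degLtAux _ _ h1 h2)
    refine ⟨Q₀ + Q', R, ?_, hR⟩
    rw [Matrix.mul_add]
    have h3 : A = S * Q₀ + (A - S * Q₀) := by abel
    rw [h3, hQR]; abel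

/-- Right division: A = Q * S + R with all entries of R of degree < d. -/
lemma matDivRight {F : Type*} [Field F] {m p : ℕ} (d : ℕ)
    (S : Matrix (Fin m) (Fin m) F[X])
    (hdeg : ∀ a b, (S a b).degree ≤ (d : ℕ))
    (hinv : IsUnit (Matrix.of fun a b => (S a b).coeff d).det)
    (A : Matrix (Fin p) (Fin m) F[X]) :
    ∃ Q R : Matrix (Fin p) (Fin m) F[X],
      A = Q * S + R ∧ ∀ a b, (R a b).degree < (d : ℕ) := by
  have hinv' : IsUnit (Matrix.of fun a b => (S.transpose a b).coeff d).det := by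
    have h : (Matrix.of fun a b => (S.transpose a b).coeff d)
        = (Matrix.of fun a b => (S a b).coeff d).transpose := by
      ext a b; rfl
    rw [h, Matrix.det_transpose]
    exact hinv
  obtain ⟨Q, R, hQR, hR⟩ := matDivLeft d S.transpose
    (fun a b => hdeg b a) hinv' A.transpose
  refine ⟨Q.transpose, R.transpose, ?_, fun a b => hR b a⟩
  have := congrArg Matrix.transpose hQR
  rwa [Matrix.transpose_transpose, Matrix.transpose_add, Matrix.transpose_mul,
    Matrix.transpose_transpose] at this

/-- The block index of a position `x`. -/
def blkIdx (s : ℕ) (ns : ℕ → ℕ) (x : ℕ) : ℕ :=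
  Nat.findGreatest (fun t => ns t ≤ x) (s - 1)

lemma nsStrictMono {s : ℕ} {ns : ℕ → ℕ} (hmono : ∀ t, t < s → ns t < ns (t + 1)) :
    ∀ t u, t < u → u ≤ s → ns t < ns u := by
  intro t u
  induction u with
  | zero => omega
  | succ u ih =>
    intro htu hu
    rcases Nat.lt_or_ge t u with h | h
    · exact (ih h (by omega)).trans (hmono u (by omega))
    · have : t = u := by omega
      subst this
      exact hmono t (by omega)

lemma nsMono {s : ℕ} {ns : ℕ → ℕ} (hmono : ∀ t, t < s → ns t < ns (t + 1)) :
    ∀ t u, t ≤ u → u ≤ s → ns t ≤ ns u := by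
  intro t u htu hu
  rcases Nat.eq_or_lt_of_le htu with h | h
  · subst h; exact le_refl _
  · exact le_of_lt (nsStrictMono hmono t u h hu)

lemma blkIdx_lt {s : ℕ} {ns : ℕ → ℕ} (hs : 0 < s) (x : ℕ) : blkIdx s ns x < s := by
  have := Nat.findGreatest_le (P := fun t => ns t ≤ x) (s - 1)
  unfold blkIdx
  omega

lemma blkIdx_ns_le {s : ℕ} {ns : ℕ → ℕ} (h0 : ns 0 = 0) (x : ℕ) :
    ns (blkIdx s ns x) ≤ x :=
  Nat.findGreatest_spec (P := fun t => ns t ≤ x) (m := 0) (Nat.zero_le _) (by omega)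

lemma blkIdx_lt_next {s n : ℕ} {ns : ℕ → ℕ} (hs : 0 < s) (hlast : ns s = n) (x : ℕ)
    (hx : x < n) : x < ns (blkIdx s ns x + 1) := by
  rcases Nat.lt_or_ge (blkIdx s ns x) (s - 1) with h | h
  · by_contra hc
    exact Nat.findGreatest_is_greatest (P := fun t => ns t ≤ x)
      (Nat.lt_succ_self (blkIdx s ns x)) (by unfold blkIdx at h ⊢; omega)
      (by show ns (blkIdx s ns x + 1) ≤ x; omega)
  · have h2 := Nat.findGreatest_le (P := fun t => ns t ≤ x) (s - 1)
    have hB : blkIdx s ns x = s - 1 := le_antisymm h2 h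
    have h3 : blkIdx s ns x + 1 = s := by omega
    rw [h3, hlast]; exact hx

lemma blkIdx_eq {s : ℕ} {ns : ℕ → ℕ} (hs : 0 < s) (h0 : ns 0 = 0)
    (hmono : ∀ t, t < s → ns t < ns (t + 1)) {t x : ℕ} (ht : t < s)
    (h1 : ns t ≤ x) (h2 : x < ns (t + 1)) : blkIdx s ns x = t := by
  have hBs : blkIdx s ns x < s := blkIdx_lt hs x
  have hle : ns (blkIdx s ns x) ≤ x := blkIdx_ns_le h0 x
  have hge : t ≤ blkIdx s ns x := Nat.le_findGreatest (by omega) h1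
  rcases Nat.eq_or_lt_of_le hge with h | h
  · omega
  · exfalso
    have : ns (t + 1) ≤ ns (blkIdx s ns x) :=
      nsMono hmono (t + 1) (blkIdx s ns x) (by omega) (by omega)
    omega

/-- Sum over `Fin n` of a function supported on a block. -/
lemma sumBlock {F : Type*} [Field F] {n m lo : ℕ} (hm : ∀ c : Fin m, lo + (c : ℕ) < n)
    (f : Fin n → F[X]) (hf : ∀ j : Fin n, ¬(lo ≤ (j : ℕ) ∧ (j : ℕ) < lo + m) → f j = 0) :
    ∑ j, f j = ∑ c : Fin m, f ⟨lo + (c : ℕ), hm c⟩ := by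
  set e : Fin m ↪ Fin n :=
    ⟨fun c => ⟨lo + (c : ℕ), hm c⟩, by
      intro a b hab
      have : lo + (a : ℕ) = lo + (b : ℕ) := congrArg Fin.val hab
      exact Fin.ext (by omega)⟩ with he
  rw [show ∑ c : Fin m, f ⟨lo + (c : ℕ), hm c⟩ = ∑ j ∈ Finset.univ.map e, f j from
    (Finset.sum_map Finset.univ e f).symm]
  refine (Finset.sum_subset (Finset.subset_univ _) ?_).symm
  intro j _ hj
  refine hf j fun hcon => hj ?_
  refine Finset.mem_map.mpr ⟨⟨(j : ℕ) - lo, by omega⟩, Finset.mem_univ _, ?_⟩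
  exact Fin.ext (by show lo + ((j : ℕ) - lo) = (j : ℕ); omega)

/-- `1 + E` has determinant 1 if `E` is strictly upper triangular. -/
lemma detOneAdd {F : Type*} [Field F] {n : ℕ} (E : Matrix (Fin n) (Fin n) F[X])
    (hE : ∀ i j : Fin n, (j : ℕ) ≤ (i : ℕ) → E i j = 0) :
    IsUnit (1 + E : Matrix (Fin n) (Fin n) F[X]).det := by
  have h : (1 + E).BlockTriangular id := by
    intro i j hij
    have hji : (j : ℕ) < (i : ℕ) := hij
    rw [Matrix.add_apply, Matrix.one_apply_ne (by intro h; subst h; omega),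
      hE i j (by omega), add_zero]
  rw [Matrix.det_of_upperTriangular h]
  have h1 : ∀ i, (1 + E) i i = 1 := by
    intro i
    rw [Matrix.add_apply, Matrix.one_apply_eq, hE i i (le_refl _), add_zero]
  rw [Finset.prod_congr rfl fun i _ => h1 i]
  simp

lemma unimodRefl {F : Type*} [Field F] {n : ℕ} (T : Matrix (Fin n) (Fin n) F[X]) :
    UnimodEquiv T T :=
  ⟨1, 1, by simp, by simp, by simp⟩

lemma unimodMulRight {F : Type*} [Field F] {n : ℕ} {T P W : Matrix (Fin n) (Fin n) F[X]}
    (h : UnimodEquiv T P) (hW : IsUnit W.det) : UnimodEquiv T (P * W) := by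
  obtain ⟨U, V, hU, hV, hP⟩ := h
  exact ⟨U, V * W, hU, by rw [Matrix.det_mul]; exact hV.mul hW,
    by rw [hP]; noncomm_ring⟩

lemma unimodMulLeft {F : Type*} [Field F] {n : ℕ} {T P W : Matrix (Fin n) (Fin n) F[X]}
    (h : UnimodEquiv T P) (hW : IsUnit W.det) : UnimodEquiv T (W * P) := by
  obtain ⟨U, V, hU, hV, hP⟩ := h
  exact ⟨W * U, V, by rw [Matrix.det_mul]; exact hW.mul hU, hV,
    by rw [hP]; noncomm_ring⟩


lemma blockOf_apply {F : Type*} [Field F] {n : ℕ} (T : Matrix (Fin n) (Fin n) F[X])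
    {lo hi : ℕ} (a b : Fin (hi - lo)) (h1 : lo + (a : ℕ) < n) (h2 : lo + (b : ℕ) < n) :
    blockOf T lo hi a b = T ⟨lo + (a : ℕ), h1⟩ ⟨lo + (b : ℕ), h2⟩ := by
  simp only [blockOf, Matrix.of_apply]
  rw [dif_pos ⟨h1, h2⟩]

lemma stepLemma {F : Type*} [Field F] {n : ℕ} (T : Matrix (Fin n) (Fin n) F[X]) (s : ℕ)
    (hs : 0 < s) (ns : ℕ → ℕ) (h0 : ns 0 = 0) (hlast : ns s = n)
    (hmono : ∀ t, t < s → ns t < ns (t + 1)) (d : ℕ → ℕ)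
    (hdeg : ∀ t, t < s → ∀ a b,
      ((blockOf T (ns t) (ns (t + 1))) a b).degree ≤ ((d t : ℕ) : WithBot ℕ))
    (hinv : ∀ t, t < s →
      IsUnit (Matrix.of fun a b => ((blockOf T (ns t) (ns (t + 1))) a b).coeff (d t)).det)
    (T' : Matrix (Fin n) (Fin n) F[X])
    (h1 : UnimodEquiv T T')
    (h2 : ∀ i j : Fin n, blkIdx s ns (j : ℕ) < blkIdx s ns (i : ℕ) → T' i j = 0)
    (h3 : ∀ i j : Fin n, blkIdx s ns (i : ℕ) = blkIdx s ns (j : ℕ) → T' i j = T i j)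
    (t u : ℕ) (htu : t < u) (hu : u < s) :
    ∃ T'' : Matrix (Fin n) (Fin n) F[X],
      UnimodEquiv T T'' ∧
      (∀ i j : Fin n, blkIdx s ns (j : ℕ) < blkIdx s ns (i : ℕ) → T'' i j = 0) ∧
      (∀ i j : Fin n, blkIdx s ns (i : ℕ) = blkIdx s ns (j : ℕ) → T'' i j = T i j) ∧
      (∀ i j : Fin n, ¬(blkIdx s ns (i : ℕ) ≤ t ∧ u ≤ blkIdx s ns (j : ℕ)) →
        T'' i j = T' i j) ∧
      (∀ i j : Fin n, blkIdx s ns (i : ℕ) = t → blkIdx s ns (j : ℕ) = u →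
        (T'' i j).degree < ((min (d t) (d u) : ℕ) : WithBot ℕ)) := by
  have ht : t < s := lt_trans htu hu
  have hnt : ns t < ns (t + 1) := hmono t ht
  have hnu : ns u < ns (u + 1) := hmono u hu
  have hn1 : ns (t + 1) ≤ ns u := nsMono hmono (t + 1) u htu hu.le
  have hun : ns (u + 1) ≤ n := by
    have := nsMono hmono (u + 1) s (by omega) le_rfl
    omega
  have htn : ns (t + 1) ≤ n := by omega
  -- membership characterizations
  have hmemT : ∀ x : ℕ, blkIdx s ns x = t → ns t ≤ x ∧ (x < n → x < ns (t + 1)) := by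
    intro x hx
    refine ⟨hx ▸ blkIdx_ns_le h0 x, fun hxn => hx ▸ blkIdx_lt_next hs hlast x hxn⟩
  have hmemU : ∀ x : ℕ, blkIdx s ns x = u → ns u ≤ x ∧ (x < n → x < ns (u + 1)) := by
    intro x hx
    refine ⟨hx ▸ blkIdx_ns_le h0 x, fun hxn => hx ▸ blkIdx_lt_next hs hlast x hxn⟩
  have hfinT : ∀ c : Fin (ns (t + 1) - ns t), ns t + (c : ℕ) < n := by
    intro c; have := c.isLt; omega
  have hfinU : ∀ c : Fin (ns (u + 1) - ns u), ns u + (c : ℕ) < n := by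
    intro c; have := c.isLt; omega
  have hBfinT : ∀ c : Fin (ns (t + 1) - ns t), blkIdx s ns (ns t + (c : ℕ)) = t := by
    intro c
    exact blkIdx_eq hs h0 hmono ht (Nat.le_add_right _ _) (by have := c.isLt; omega)
  have hBfinU : ∀ c : Fin (ns (u + 1) - ns u), blkIdx s ns (ns u + (c : ℕ)) = u := by
    intro c
    exact blkIdx_eq hs h0 hmono hu (Nat.le_add_right _ _) (by have := c.isLt; omega)
  have hSt : ∀ a c : Fin (ns (t + 1) - ns t),
      blockOf T (ns t) (ns (t + 1)) a c = T ⟨ns t + (a : ℕ), hfinT a⟩ ⟨ns t + (c : ℕ), hfinT c⟩ :=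
    fun a c => blockOf_apply T a c (hfinT a) (hfinT c)
  have hSu : ∀ a c : Fin (ns (u + 1) - ns u),
      blockOf T (ns u) (ns (u + 1)) a c = T ⟨ns u + (a : ℕ), hfinU a⟩ ⟨ns u + (c : ℕ), hfinU c⟩ :=
    fun a c => blockOf_apply T a c (hfinU a) (hfinU c)
  set A : Matrix (Fin (ns (t + 1) - ns t)) (Fin (ns (u + 1) - ns u)) F[X] :=
    Matrix.of fun a b => T' ⟨ns t + (a : ℕ), hfinT a⟩ ⟨ns u + (b : ℕ), hfinU b⟩ with hA
  by_cases hd : d t ≤ d u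
  · -- column operation: divide on the left by the (t,t) block
    obtain ⟨Q, R, hQR, hRdeg⟩ :=
      matDivLeft (d t) (blockOf T (ns t) (ns (t + 1))) (hdeg t ht) (hinv t ht) A
    set E : Matrix (Fin n) (Fin n) F[X] := Matrix.of fun i j =>
      if h : ns t ≤ (i : ℕ) ∧ (i : ℕ) < ns (t + 1) ∧ ns u ≤ (j : ℕ) ∧ (j : ℕ) < ns (u + 1)
      then -(Q ⟨(i : ℕ) - ns t, by omega⟩ ⟨(j : ℕ) - ns u, by omega⟩) else 0 with hE
    have hEsupp : ∀ i j : Fin n, (j : ℕ) ≤ (i : ℕ) → E i j = 0 := by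
      intro i j hji
      rw [hE, Matrix.of_apply, dif_neg]
      intro hcon
      omega
    have hdet : IsUnit (1 + E : Matrix (Fin n) (Fin n) F[X]).det := detOneAdd E hEsupp
    have hT'' : ∀ i j : Fin n, (T' * (1 + E)) i j = T' i j + (T' * E) i j := by
      intro i j
      rw [Matrix.mul_add, Matrix.mul_one, Matrix.add_apply]
    have hzero : ∀ i j : Fin n,
        (t < blkIdx s ns (i : ℕ) ∨ ¬(ns u ≤ (j : ℕ) ∧ (j : ℕ) < ns (u + 1))) →
        (T' * E) i j = 0 := by
      intro i j hcase
      rw [Matrix.mul_apply]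
      apply Finset.sum_eq_zero
      intro j' _
      by_cases hc : ns t ≤ (j' : ℕ) ∧ (j' : ℕ) < ns (t + 1) ∧ ns u ≤ (j : ℕ) ∧ (j : ℕ) < ns (u + 1)
      · rcases hcase with hcase | hcase
        · have hBj' : blkIdx s ns (j' : ℕ) = t := blkIdx_eq hs h0 hmono ht hc.1 hc.2.1
          rw [h2 i j' (by omega), zero_mul]
        · exact absurd ⟨hc.2.2.1, hc.2.2.2⟩ hcase
      · rw [hE, Matrix.of_apply, dif_neg hc, mul_zero]
    have hmain : ∀ (i j : Fin n) (a : Fin (ns (t + 1) - ns t)) (b : Fin (ns (u + 1) - ns u)),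
        (i : ℕ) = ns t + (a : ℕ) → (j : ℕ) = ns u + (b : ℕ) →
        (T' * (1 + E)) i j = R a b := by
      intro i j a b hia hjb
      have hieq : i = ⟨ns t + (a : ℕ), hfinT a⟩ := Fin.ext hia
      have hjeq : j = ⟨ns u + (b : ℕ), hfinU b⟩ := Fin.ext hjb
      subst hieq hjeq
      rw [hT'']
      have hsum : (T' * E) ⟨ns t + (a : ℕ), hfinT a⟩ ⟨ns u + (b : ℕ), hfinU b⟩
          = ∑ c : Fin (ns (t + 1) - ns t),
            T' ⟨ns t + (a : ℕ), hfinT a⟩ ⟨ns t + (c : ℕ), hfinT c⟩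
              * E ⟨ns t + (c : ℕ), hfinT c⟩ ⟨ns u + (b : ℕ), hfinU b⟩ := by
        rw [Matrix.mul_apply]
        exact sumBlock hfinT _ (fun j' hj' => by
          rw [hE, Matrix.of_apply, dif_neg, mul_zero]
          intro hcon
          exact hj' ⟨hcon.1, by omega⟩)
      rw [hsum]
      have hterm : ∀ c : Fin (ns (t + 1) - ns t),
          T' ⟨ns t + (a : ℕ), hfinT a⟩ ⟨ns t + (c : ℕ), hfinT c⟩
            * E ⟨ns t + (c : ℕ), hfinT c⟩ ⟨ns u + (b : ℕ), hfinU b⟩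
          = blockOf T (ns t) (ns (t + 1)) a c * -(Q c b) := by
        intro c
        have hTc : T' ⟨ns t + (a : ℕ), hfinT a⟩ ⟨ns t + (c : ℕ), hfinT c⟩
            = blockOf T (ns t) (ns (t + 1)) a c := by
          rw [h3 _ _ (by rw [hBfinT a, hBfinT c]), hSt]
        have hEc : E ⟨ns t + (c : ℕ), hfinT c⟩ ⟨ns u + (b : ℕ), hfinU b⟩ = -(Q c b) := by
          rw [hE, Matrix.of_apply, dif_pos
            ⟨Nat.le_add_right _ _, by show ns t + (c : ℕ) < ns (t + 1); have := c.isLt; omega,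
              Nat.le_add_right _ _, by show ns u + (b : ℕ) < ns (u + 1); have := b.isLt; omega⟩]
          congr 2 <;> exact Fin.ext (by show _ = (_ : ℕ); simp)
        rw [hTc, hEc]
      rw [Finset.sum_congr rfl fun c _ => hterm c]
      have : ∑ c, blockOf T (ns t) (ns (t + 1)) a c * -(Q c b)
          = -((blockOf T (ns t) (ns (t + 1)) * Q) a b) := by
        rw [Matrix.mul_apply, ← Finset.sum_neg_distrib]
        exact Finset.sum_congr rfl fun c _ => by ring
      rw [this]
      have hAab : T' ⟨ns t + (a : ℕ), hfinT a⟩ ⟨ns u + (b : ℕ), hfinU b⟩ = A a b := rfl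
      rw [hAab, hQR, Matrix.add_apply]
      ring
    refine ⟨T' * (1 + E), unimodMulRight h1 hdet, ?_, ?_, ?_, ?_⟩
    · intro i j hba
      have hz : (T' * E) i j = 0 := by
        apply hzero
        by_cases hj : ns u ≤ (j : ℕ) ∧ (j : ℕ) < ns (u + 1)
        · left
          have : blkIdx s ns (j : ℕ) = u := blkIdx_eq hs h0 hmono hu hj.1 hj.2
          omega
        · right; exact hj
      rw [hT'', hz, h2 i j hba, add_zero]
    · intro i j hij
      have hz : (T' * E) i j = 0 := by
        apply hzero
        by_cases hj : ns u ≤ (j : ℕ) ∧ (j : ℕ) < ns (u + 1)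
        · left
          have : blkIdx s ns (j : ℕ) = u := blkIdx_eq hs h0 hmono hu hj.1 hj.2
          omega
        · right; exact hj
      rw [hT'', hz, h3 i j hij, add_zero]
    · intro i j hnc
      have hz : (T' * E) i j = 0 := by
        apply hzero
        by_cases hj : ns u ≤ (j : ℕ) ∧ (j : ℕ) < ns (u + 1)
        · have hju : blkIdx s ns (j : ℕ) = u := blkIdx_eq hs h0 hmono hu hj.1 hj.2
          left
          omega
        · right; exact hj
      rw [hT'', hz, add_zero]
    · intro i j hit hju
      obtain ⟨hi1, hi2⟩ := hmemT (i : ℕ) hit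
      obtain ⟨hj1, hj2⟩ := hmemU (j : ℕ) hju
      have hi2' := hi2 i.isLt
      have hj2' := hj2 j.isLt
      rw [hmain i j ⟨(i : ℕ) - ns t, by omega⟩ ⟨(j : ℕ) - ns u, by omega⟩
        (by show (i : ℕ) = ns t + ((i : ℕ) - ns t); omega)
        (by show (j : ℕ) = ns u + ((j : ℕ) - ns u); omega), min_eq_left hd]
      exact hRdeg _ _
  · -- row operation: divide on the right by the (u,u) block
    obtain ⟨Q, R, hQR, hRdeg⟩ :=
      matDivRight (d u) (blockOf T (ns u) (ns (u + 1))) (hdeg u hu) (hinv u hu) A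
    set E : Matrix (Fin n) (Fin n) F[X] := Matrix.of fun i j =>
      if h : ns t ≤ (i : ℕ) ∧ (i : ℕ) < ns (t + 1) ∧ ns u ≤ (j : ℕ) ∧ (j : ℕ) < ns (u + 1)
      then -(Q ⟨(i : ℕ) - ns t, by omega⟩ ⟨(j : ℕ) - ns u, by omega⟩) else 0 with hE
    have hEsupp : ∀ i j : Fin n, (j : ℕ) ≤ (i : ℕ) → E i j = 0 := by
      intro i j hji
      rw [hE, Matrix.of_apply, dif_neg]
      intro hcon
      omega
    have hdet : IsUnit (1 + E : Matrix (Fin n) (Fin n) F[X]).det := detOneAdd E hEsupp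
    have hT'' : ∀ i j : Fin n, ((1 + E) * T') i j = T' i j + (E * T') i j := by
      intro i j
      rw [Matrix.add_mul, Matrix.one_mul, Matrix.add_apply]
    have hzero : ∀ i j : Fin n,
        (¬(ns t ≤ (i : ℕ) ∧ (i : ℕ) < ns (t + 1)) ∨ blkIdx s ns (j : ℕ) < u) →
        (E * T') i j = 0 := by
      intro i j hcase
      rw [Matrix.mul_apply]
      apply Finset.sum_eq_zero
      intro i' _
      by_cases hc : ns t ≤ (i : ℕ) ∧ (i : ℕ) < ns (t + 1) ∧ ns u ≤ (i' : ℕ) ∧ (i' : ℕ) < ns (u + 1)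
      · rcases hcase with hcase | hcase
        · exact absurd ⟨hc.1, hc.2.1⟩ hcase
        · have hBi' : blkIdx s ns (i' : ℕ) = u := blkIdx_eq hs h0 hmono hu hc.2.2.1 hc.2.2.2
          rw [h2 i' j (by omega), mul_zero]
      · rw [hE, Matrix.of_apply, dif_neg hc, zero_mul]
    have hmain : ∀ (i j : Fin n) (a : Fin (ns (t + 1) - ns t)) (b : Fin (ns (u + 1) - ns u)),
        (i : ℕ) = ns t + (a : ℕ) → (j : ℕ) = ns u + (b : ℕ) →
        ((1 + E) * T') i j = R a b := by
      intro i j a b hia hjb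
      have hieq : i = ⟨ns t + (a : ℕ), hfinT a⟩ := Fin.ext hia
      have hjeq : j = ⟨ns u + (b : ℕ), hfinU b⟩ := Fin.ext hjb
      subst hieq hjeq
      rw [hT'']
      have hsum : (E * T') ⟨ns t + (a : ℕ), hfinT a⟩ ⟨ns u + (b : ℕ), hfinU b⟩
          = ∑ c : Fin (ns (u + 1) - ns u),
            E ⟨ns t + (a : ℕ), hfinT a⟩ ⟨ns u + (c : ℕ), hfinU c⟩
              * T' ⟨ns u + (c : ℕ), hfinU c⟩ ⟨ns u + (b : ℕ), hfinU b⟩ := by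
        rw [Matrix.mul_apply]
        exact sumBlock hfinU _ (fun i' hi' => by
          rw [hE, Matrix.of_apply, dif_neg, zero_mul]
          intro hcon
          exact hi' ⟨hcon.2.2.1, by omega⟩)
      rw [hsum]
      have hterm : ∀ c : Fin (ns (u + 1) - ns u),
          E ⟨ns t + (a : ℕ), hfinT a⟩ ⟨ns u + (c : ℕ), hfinU c⟩
            * T' ⟨ns u + (c : ℕ), hfinU c⟩ ⟨ns u + (b : ℕ), hfinU b⟩
          = -(Q a c) * blockOf T (ns u) (ns (u + 1)) c b := by
        intro c
        have hTc : T' ⟨ns u + (c : ℕ), hfinU c⟩ ⟨ns u + (b : ℕ), hfinU b⟩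
            = blockOf T (ns u) (ns (u + 1)) c b := by
          rw [h3 _ _ (by rw [hBfinU c, hBfinU b]), hSu]
        have hEc : E ⟨ns t + (a : ℕ), hfinT a⟩ ⟨ns u + (c : ℕ), hfinU c⟩ = -(Q a c) := by
          rw [hE, Matrix.of_apply, dif_pos
            ⟨Nat.le_add_right _ _, by show ns t + (a : ℕ) < ns (t + 1); have := a.isLt; omega,
              Nat.le_add_right _ _, by show ns u + (c : ℕ) < ns (u + 1); have := c.isLt; omega⟩]
          congr 2 <;> exact Fin.ext (by show _ = (_ : ℕ); simp)
        rw [hTc, hEc]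
      rw [Finset.sum_congr rfl fun c _ => hterm c]
      have : ∑ c, -(Q a c) * blockOf T (ns u) (ns (u + 1)) c b
          = -((Q * blockOf T (ns u) (ns (u + 1))) a b) := by
        rw [Matrix.mul_apply, ← Finset.sum_neg_distrib]
        exact Finset.sum_congr rfl fun c _ => by ring
      rw [this]
      have hAab : T' ⟨ns t + (a : ℕ), hfinT a⟩ ⟨ns u + (b : ℕ), hfinU b⟩ = A a b := rfl
      rw [hAab, hQR, Matrix.add_apply]
      ring
    refine ⟨(1 + E) * T', unimodMulLeft h1 hdet, ?_, ?_, ?_, ?_⟩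
    · intro i j hba
      have hz : (E * T') i j = 0 := by
        apply hzero
        by_cases hi : ns t ≤ (i : ℕ) ∧ (i : ℕ) < ns (t + 1)
        · have hit : blkIdx s ns (i : ℕ) = t := blkIdx_eq hs h0 hmono ht hi.1 hi.2
          right
          omega
        · left; exact hi
      rw [hT'', hz, h2 i j hba, add_zero]
    · intro i j hij
      have hz : (E * T') i j = 0 := by
        apply hzero
        by_cases hi : ns t ≤ (i : ℕ) ∧ (i : ℕ) < ns (t + 1)
        · have hit : blkIdx s ns (i : ℕ) = t := blkIdx_eq hs h0 hmono ht hi.1 hi.2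
          right
          omega
        · left; exact hi
      rw [hT'', hz, h3 i j hij, add_zero]
    · intro i j hnc
      have hz : (E * T') i j = 0 := by
        apply hzero
        by_cases hi : ns t ≤ (i : ℕ) ∧ (i : ℕ) < ns (t + 1)
        · have hit : blkIdx s ns (i : ℕ) = t := blkIdx_eq hs h0 hmono ht hi.1 hi.2
          right
          omega
        · left; exact hi
      rw [hT'', hz, add_zero]
    · intro i j hit hju
      obtain ⟨hi1, hi2⟩ := hmemT (i : ℕ) hit
      obtain ⟨hj1, hj2⟩ := hmemU (j : ℕ) hju
      have hi2' := hi2 i.isLt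
      have hj2' := hj2 j.isLt
      rw [hmain i j ⟨(i : ℕ) - ns t, by omega⟩ ⟨(j : ℕ) - ns u, by omega⟩
        (by show (i : ℕ) = ns t + ((i : ℕ) - ns t); omega)
        (by show (j : ℕ) = ns u + ((j : ℕ) - ns u); omega), min_eq_right (by omega : d u ≤ d t)]
      exact hRdeg _ _
lemma mainAux {F : Type*} [Field F] {n : ℕ} (T : Matrix (Fin n) (Fin n) F[X]) (s : ℕ)
    (hs : 0 < s) (ns : ℕ → ℕ) (h0 : ns 0 = 0) (hlast : ns s = n)
    (hmono : ∀ t, t < s → ns t < ns (t + 1))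
    (htri : ∀ i j : Fin n, blkIdx s ns (j : ℕ) < blkIdx s ns (i : ℕ) → T i j = 0)
    (d : ℕ → ℕ)
    (hdeg : ∀ t, t < s → ∀ a b,
      ((blockOf T (ns t) (ns (t + 1))) a b).degree ≤ ((d t : ℕ) : WithBot ℕ))
    (hinv : ∀ t, t < s →
      IsUnit (Matrix.of fun a b => ((blockOf T (ns t) (ns (t + 1))) a b).coeff (d t)).det)
    (N : ℕ) :
    ∃ T' : Matrix (Fin n) (Fin n) F[X],
      UnimodEquiv T T' ∧
      (∀ i j : Fin n, blkIdx s ns (j : ℕ) < blkIdx s ns (i : ℕ) → T' i j = 0) ∧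
      (∀ i j : Fin n, blkIdx s ns (i : ℕ) = blkIdx s ns (j : ℕ) → T' i j = T i j) ∧
      (∀ i j : Fin n, blkIdx s ns (i : ℕ) < blkIdx s ns (j : ℕ) →
        (blkIdx s ns (j : ℕ) - blkIdx s ns (i : ℕ)) * s + blkIdx s ns (i : ℕ) < N →
        (T' i j).degree <
          ((min (d (blkIdx s ns (i : ℕ))) (d (blkIdx s ns (j : ℕ))) : ℕ) : WithBot ℕ)) := by
  induction N with
  | zero =>
    exact ⟨T, unimodRefl T, htri, fun _ _ _ => rfl,
      fun i j _ h => absurd h (Nat.not_lt_zero _)⟩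
  | succ N ih =>
    obtain ⟨T', h1, h2, h3, h4⟩ := ih
    have hN : N / s * s + N % s = N := by rw [Nat.mul_comm]; exact Nat.div_add_mod N s
    have hms : N % s < s := Nat.mod_lt _ hs
    have huniq : ∀ i j : Fin n, blkIdx s ns (i : ℕ) < blkIdx s ns (j : ℕ) →
        (blkIdx s ns (j : ℕ) - blkIdx s ns (i : ℕ)) * s + blkIdx s ns (i : ℕ) = N →
        blkIdx s ns (i : ℕ) = N % s ∧ blkIdx s ns (j : ℕ) = N % s + N / s := by
      intro i j hij he
      have hBi : blkIdx s ns (i : ℕ) < s := blkIdx_lt hs _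
      have hBj : blkIdx s ns (j : ℕ) < s := blkIdx_lt hs _
      have h5 : N % s = blkIdx s ns (i : ℕ) := by
        rw [← he, Nat.mul_comm, Nat.mul_add_mod, Nat.mod_eq_of_lt hBi]
      have h6 : N / s = blkIdx s ns (j : ℕ) - blkIdx s ns (i : ℕ) := by
        rw [← he, Nat.mul_comm, Nat.mul_add_div hs, Nat.div_eq_of_lt hBi, Nat.add_zero]
      omega
    by_cases hval : 0 < N / s ∧ N % s + N / s < s
    · obtain ⟨hk, hmk⟩ := hval
      obtain ⟨T'', g1, g2, g3, g4, g5⟩ := stepLemma T s hs ns h0 hlast hmono d hdeg hinv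
        T' h1 h2 h3 (N % s) (N % s + N / s) (by omega) hmk
      refine ⟨T'', g1, g2, g3, ?_⟩
      intro i j hij hlt
      rcases Nat.lt_or_ge
        ((blkIdx s ns (j : ℕ) - blkIdx s ns (i : ℕ)) * s + blkIdx s ns (i : ℕ)) N with
        hcase | hcase
      · have hunch : T'' i j = T' i j := by
          apply g4
          rintro ⟨hc1, hc2⟩
          by_cases hcc : blkIdx s ns (i : ℕ) = N % s ∧ blkIdx s ns (j : ℕ) = N % s + N / s
          · rw [hcc.1, hcc.2] at hcase
            have : (N % s + N / s - N % s) = N / s := by omega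
            rw [this] at hcase
            omega
          · have hx : N / s + 1 ≤ blkIdx s ns (j : ℕ) - blkIdx s ns (i : ℕ) := by omega
            have hbig : N < (blkIdx s ns (j : ℕ) - blkIdx s ns (i : ℕ)) * s
                + blkIdx s ns (i : ℕ) := by
              calc N = N / s * s + N % s := hN.symm
                _ < N / s * s + s := Nat.add_lt_add_left hms _
                _ = (N / s + 1) * s := (Nat.succ_mul _ s).symm
                _ ≤ (blkIdx s ns (j : ℕ) - blkIdx s ns (i : ℕ)) * s :=
                    Nat.mul_le_mul_right s hx
                _ ≤ _ := Nat.le_add_right _ _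
            exact absurd hcase (Nat.lt_asymm hbig)
        rw [hunch]
        exact h4 i j hij hcase
      · have he : (blkIdx s ns (j : ℕ) - blkIdx s ns (i : ℕ)) * s + blkIdx s ns (i : ℕ) = N :=
          Nat.le_antisymm (Nat.lt_succ_iff.mp hlt) hcase
        obtain ⟨hbi, hbj⟩ := huniq i j hij he
        rw [hbi, hbj]
        exact g5 i j hbi hbj
    · refine ⟨T', h1, h2, h3, ?_⟩
      intro i j hij hlt
      rcases Nat.lt_or_ge
        ((blkIdx s ns (j : ℕ) - blkIdx s ns (i : ℕ)) * s + blkIdx s ns (i : ℕ)) N with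
        hcase | hcase
      · exact h4 i j hij hcase
      · have he : (blkIdx s ns (j : ℕ) - blkIdx s ns (i : ℕ)) * s + blkIdx s ns (i : ℕ) = N :=
          Nat.le_antisymm (Nat.lt_succ_iff.mp hlt) hcase
        obtain ⟨hbi, hbj⟩ := huniq i j hij he
        have hBj : blkIdx s ns (j : ℕ) < s := blkIdx_lt hs _
        exact absurd ⟨by omega, by omega⟩ hval

theorem statement_12 {F : Type*} [Field F] {n : ℕ}
    (T : Matrix (Fin n) (Fin n) F[X])
    (s : ℕ) (hs : 0 < s) (ns : ℕ → ℕ)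
    (h0 : ns 0 = 0) (hlast : ns s = n)
    (hmono : ∀ t, t < s → ns t < ns (t + 1))
    -- T is block upper triangular with respect to the partition
    (hblocktri : ∀ t, t ≤ s → ∀ i j : Fin n, ns t ≤ (i : ℕ) → (j : ℕ) < ns t → T i j = 0)
    -- each diagonal block is strictly regular, of degree d t with invertible
    -- leading coefficient
    (d : ℕ → ℕ)
    (hblocks : ∀ t, t < s →
      (∀ a b, ((blockOf T (ns t) (ns (t + 1))) a b).degree ≤ ((d t : ℕ) : WithBot ℕ)) ∧
      (∃ a b, ((blockOf T (ns t) (ns (t + 1))) a b).degree = ((d t : ℕ) : WithBot ℕ)) ∧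
      IsUnit (Matrix.of fun a b => ((blockOf T (ns t) (ns (t + 1))) a b).coeff (d t)).det) :
    ∃ T' : Matrix (Fin n) (Fin n) F[X],
      -- T' is block upper triangular with respect to the same partition
      (∀ t, t ≤ s → ∀ i j : Fin n, ns t ≤ (i : ℕ) → (j : ℕ) < ns t → T' i j = 0) ∧
      -- T' is unimodularly equivalent to T
      UnimodEquiv T T' ∧
      -- the diagonal blocks coincide with those of T
      (∀ t, t < s → blockOf T' (ns t) (ns (t + 1)) = blockOf T (ns t) (ns (t + 1))) ∧
      -- off-diagonal blocks have entries zero or of degree < min (d t) (d u)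
      (∀ t u, t < u → u < s → ∀ i j : Fin n,
        ns t ≤ (i : ℕ) → (i : ℕ) < ns (t + 1) → ns u ≤ (j : ℕ) → (j : ℕ) < ns (u + 1) →
        T' i j = 0 ∨ (T' i j).natDegree < min (d t) (d u)) := by
  have htri : ∀ i j : Fin n, blkIdx s ns (j : ℕ) < blkIdx s ns (i : ℕ) → T i j = 0 := by
    intro i j hba
    have hBi : blkIdx s ns (i : ℕ) ≤ s := le_of_lt (blkIdx_lt hs _)
    apply hblocktri (blkIdx s ns (i : ℕ)) hBi i j (blkIdx_ns_le h0 _)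
    have hb1 : (j : ℕ) < ns (blkIdx s ns (j : ℕ) + 1) := blkIdx_lt_next hs hlast _ j.isLt
    have hb2 : ns (blkIdx s ns (j : ℕ) + 1) ≤ ns (blkIdx s ns (i : ℕ)) :=
      nsMono hmono _ _ (by omega) hBi
    omega
  obtain ⟨T', h1, h2, h3, h4⟩ := mainAux T s hs ns h0 hlast hmono htri d
    (fun t ht => (hblocks t ht).1) (fun t ht => (hblocks t ht).2.2) (s * s)
  refine ⟨T', ?_, h1, ?_, ?_⟩
  · intro t htle i j hi hj
    rcases Nat.eq_or_lt_of_le htle with heq | htlt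
    · exfalso
      subst heq
      rw [hlast] at hi
      exact absurd hi (Nat.not_le.mpr i.isLt)
    · apply h2
      have hBi : t ≤ blkIdx s ns (i : ℕ) := Nat.le_findGreatest (by omega) hi
      have hBj : blkIdx s ns (j : ℕ) < t := by
        by_contra hcon
        have hc1 : ns t ≤ ns (blkIdx s ns (j : ℕ)) :=
          nsMono hmono t _ (by omega) (le_of_lt (blkIdx_lt hs _))
        have hc2 : ns (blkIdx s ns (j : ℕ)) ≤ (j : ℕ) := blkIdx_ns_le h0 (j : ℕ)
        omega
      omega
  · intro t ht
    funext a b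
    show blockOf T' (ns t) (ns (t + 1)) a b = blockOf T (ns t) (ns (t + 1)) a b
    simp only [blockOf, Matrix.of_apply]
    by_cases hc : ns t + (a : ℕ) < n ∧ ns t + (b : ℕ) < n
    · rw [dif_pos hc, dif_pos hc]
      apply h3
      have ha := a.isLt
      have hb := b.isLt
      rw [blkIdx_eq hs h0 hmono ht (Nat.le_add_right _ _) (by show ns t + (a:ℕ) < ns (t+1); omega),
          blkIdx_eq hs h0 hmono ht (Nat.le_add_right _ _) (by show ns t + (b:ℕ) < ns (t+1); omega)]
    · rw [dif_neg hc, dif_neg hc]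
  · intro t u htu hus i j hi1 hi2 hj1 hj2
    have hbi : blkIdx s ns (i : ℕ) = t := blkIdx_eq hs h0 hmono (by omega) hi1 hi2
    have hbj : blkIdx s ns (j : ℕ) = u := blkIdx_eq hs h0 hmono hus hj1 hj2
    have hidx : (blkIdx s ns (j : ℕ) - blkIdx s ns (i : ℕ)) * s + blkIdx s ns (i : ℕ)
        < s * s := by
      rw [hbi, hbj]
      have hut : u - t ≤ s - 1 := by omega
      have h5 : (u - t) * s ≤ (s - 1) * s := Nat.mul_le_mul_right s hut
      have h6 : (s - 1) * s + s = s * s := by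
        have hs1 : s - 1 + 1 = s := by omega
        calc (s - 1) * s + s = (s - 1 + 1) * s := (Nat.succ_mul _ _).symm
          _ = s * s := by rw [hs1]
      calc (u - t) * s + t ≤ (s - 1) * s + t := Nat.add_le_add_right h5 t
        _ < (s - 1) * s + s := Nat.add_lt_add_left (by omega) _
        _ = s * s := h6
    have hdegree := h4 i j (by omega) hidx
    rw [hbi, hbj] at hdegree
    by_cases hz : T' i j = 0
    · exact Or.inl hz
    · exact Or.inr ((Polynomial.natDegree_lt_iff_degree_lt hz).mpr hdegree)
end

section
/- Let F be a field, P an m×n matrix polynomial over F all of whose entries have degree at most g, and a, b, c, d ∈ F with ad − bc ≠ 0. Let χ ∈ F[λ] be irreducible, and let M_A(χ) be its Möbius transform taken with grade equal to deg χ; assume M_A(χ) is nonconstant (which holds automatically when deg χ ≥ 2). Let M_A(P) be the entrywise grade-g Möbius transform of P. Then for every j with 1 ≤ j ≤ min(m,n): some j×j minor of P is nonzero if and only if some j×j minor of M_A(P) is nonzero, and in that case the multiplicity of χ in D_j(P) equals the multiplicity of M_A(χ) in D_j(M_A(P)). -/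
open Polynomial

noncomputable def mobius {F : Type*} [Field F] (a b c d : F) (g : ℕ) (p : F[X]) : F[X] :=
  ∑ i ∈ Finset.range (g + 1),
    C (p.coeff i) * (C a * X + C b) ^ i * (C c * X + C d) ^ (g - i)

namespace MobiusAux

variable {F : Type*} [Field F]

lemma mobius_zero (a b c d : F) (g : ℕ) : mobius a b c d g 0 = 0 := by
  simp [mobius]

lemma mobius_add (a b c d : F) (g : ℕ) (p q : F[X]) :
    mobius a b c d g (p + q) = mobius a b c d g p + mobius a b c d g q := by
  simp [mobius, C_add, add_mul, Finset.sum_add_distrib]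

noncomputable def mobiusAH (a b c d : F) (g : ℕ) : F[X] →+ F[X] where
  toFun := mobius a b c d g
  map_zero' := mobius_zero a b c d g
  map_add' := mobius_add a b c d g

@[simp] lemma mobiusAH_apply (a b c d : F) (g : ℕ) (p : F[X]) :
    mobiusAH a b c d g p = mobius a b c d g p := rfl

lemma mobius_C_mul (a b c d : F) (g : ℕ) (k : F) (p : F[X]) :
    mobius a b c d g (C k * p) = C k * mobius a b c d g p := by
  simp [mobius, C_mul, Finset.mul_sum, mul_assoc]

lemma natDegree_mobius_le (a b c d : F) (g : ℕ) (p : F[X]) :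
    (mobius a b c d g p).natDegree ≤ g := by
  refine natDegree_sum_le_of_forall_le _ _ fun i hi => ?_
  simp only [Finset.mem_range] at hi
  calc (C (p.coeff i) * (C a * X + C b) ^ i * (C c * X + C d) ^ (g - i)).natDegree
      ≤ (C (p.coeff i) * (C a * X + C b) ^ i).natDegree
        + ((C c * X + C d) ^ (g - i)).natDegree := natDegree_mul_le
    _ ≤ ((C (p.coeff i)).natDegree + ((C a * X + C b) ^ i).natDegree)
        + ((C c * X + C d) ^ (g - i)).natDegree := by
          exact Nat.add_le_add_right natDegree_mul_le _
    _ ≤ (0 + i * 1) + (g - i) * 1 := by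
          refine add_le_add (add_le_add (le_of_eq (natDegree_C _)) ?_) ?_
          · exact le_trans natDegree_pow_le (Nat.mul_le_mul_left _ natDegree_linear_le)
          · exact le_trans natDegree_pow_le (Nat.mul_le_mul_left _ natDegree_linear_le)
    _ ≤ g := by omega

lemma linear_ne_zero' (a b c d : F) (hA : a * d - b * c ≠ 0) :
    (C c * X + C d : F[X]) ≠ 0 := by
  intro h
  have hc : c = 0 := by
    have := congrArg (fun q : F[X] => q.coeff 1) h; simpa using this
  have hd : d = 0 := by
    have := congrArg (fun q : F[X] => q.coeff 0) h; simpa using this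
  apply hA; rw [hc, hd]; ring

lemma mobius_ratFunc (a b c d : F) (hA : a * d - b * c ≠ 0) (g : ℕ) (p : F[X])
    (hp : p.natDegree ≤ g) :
    algebraMap F[X] (RatFunc F) (mobius a b c d g p)
      = (algebraMap F[X] (RatFunc F) (C c * X + C d)) ^ g *
        eval₂ ((algebraMap F[X] (RatFunc F)).comp (C : F →+* F[X]))
          (algebraMap F[X] (RatFunc F) (C a * X + C b) /
            algebraMap F[X] (RatFunc F) (C c * X + C d)) p := by
  have hB : algebraMap F[X] (RatFunc F) (C c * X + C d) ≠ 0 :=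
    fun h => linear_ne_zero' a b c d hA (IsFractionRing.injective F[X] (RatFunc F) (by simpa using h))
  rw [eval₂_eq_sum_range' _ (lt_of_le_of_lt hp (Nat.lt_succ_self g)), mobius, map_sum,
    Finset.mul_sum]
  refine Finset.sum_congr rfl fun i hi => ?_
  simp only [Finset.mem_range] at hi
  rw [map_mul, map_mul, map_pow, map_pow, RingHom.comp_apply, div_pow]
  have hBg : (algebraMap F[X] (RatFunc F) (C c * X + C d)) ^ g
      = (algebraMap F[X] (RatFunc F) (C c * X + C d)) ^ (g - i)
        * (algebraMap F[X] (RatFunc F) (C c * X + C d)) ^ i := by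
    rw [← pow_add]; congr 1; omega
  rw [hBg]
  set A' := algebraMap F[X] (RatFunc F) (C a * X + C b) with hA'
  set B' := algebraMap F[X] (RatFunc F) (C c * X + C d) with hB'
  set K := (algebraMap F[X] (RatFunc F)) (C (p.coeff i)) with hK
  have key : B' ^ i * (A' ^ i / B' ^ i) = A' ^ i := by
    rw [← mul_div_assoc, mul_div_cancel_left₀ _ (pow_ne_zero i hB)]
  calc K * A' ^ i * B' ^ (g - i)
      = B' ^ (g - i) * K * (B' ^ i * (A' ^ i / B' ^ i)) := by rw [key]; ring
    _ = B' ^ (g - i) * B' ^ i * (K * (A' ^ i / B' ^ i)) := by ring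

lemma mobius_mul (a b c d : F) (hA : a * d - b * c ≠ 0) {g1 g2 : ℕ} {p q : F[X]}
    (hp : p.natDegree ≤ g1) (hq : q.natDegree ≤ g2) :
    mobius a b c d (g1 + g2) (p * q) = mobius a b c d g1 p * mobius a b c d g2 q := by
  apply IsFractionRing.injective F[X] (RatFunc F)
  have hpq : (p * q).natDegree ≤ g1 + g2 := le_trans natDegree_mul_le (add_le_add hp hq)
  rw [map_mul, mobius_ratFunc a b c d hA _ _ hpq, mobius_ratFunc a b c d hA _ _ hp,
    mobius_ratFunc a b c d hA _ _ hq, eval₂_mul, pow_add]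
  ring

lemma mobius_one (a b c d : F) (g : ℕ) :
    mobius a b c d g (1 : F[X]) = (C c * X + C d) ^ g := by
  rw [mobius, Finset.sum_eq_single 0 (fun i _ hi => by simp [coeff_one, hi]) (by simp)]
  simp

lemma mobius_pow (a b c d : F) (hA : a * d - b * c ≠ 0) {k : ℕ} {p : F[X]}
    (hp : p.natDegree ≤ k) (t : ℕ) :
    mobius a b c d (t * k) (p ^ t) = (mobius a b c d k p) ^ t := by
  induction t with
  | zero => simpa using mobius_one a b c d 0
  | succ t ih =>
    have h1 : (t + 1) * k = t * k + k := by ring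
    have h2 : (p ^ t).natDegree ≤ t * k :=
      le_trans natDegree_pow_le (Nat.mul_le_mul_left _ hp)
    rw [h1, pow_succ, mobius_mul a b c d hA h2 hp, ih, pow_succ]

lemma mobius_prod (a b c d : F) (hA : a * d - b * c ≠ 0) {ι : Type*} (s : Finset ι)
    (f : ι → F[X]) (γ : ι → ℕ) (h : ∀ i ∈ s, (f i).natDegree ≤ γ i) :
    mobius a b c d (∑ i ∈ s, γ i) (∏ i ∈ s, f i)
      = ∏ i ∈ s, mobius a b c d (γ i) (f i) := by
  induction s using Finset.cons_induction with
  | empty => simpa using mobius_one a b c d 0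
  | cons i s hi ih =>
    rw [Finset.sum_cons, Finset.prod_cons, Finset.prod_cons,
      mobius_mul a b c d hA (h i (Finset.mem_cons_self i s))
        (le_trans (natDegree_prod_le s f)
          (Finset.sum_le_sum fun k hk => h k (Finset.mem_cons_of_mem hk))),
      ih fun k hk => h k (Finset.mem_cons_of_mem hk)]

lemma mobius_linear (a b c d u v : F) :
    mobius a b c d 1 (C u * X + C v)
      = C u * (C a * X + C b) + C v * (C c * X + C d) := by
  have h0 : (C u * X + C v : F[X]).coeff 0 = v := by simp
  have h1 : (C u * X + C v : F[X]).coeff 1 = u := by simp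
  rw [mobius]
  rw [Finset.sum_range_succ, Finset.sum_range_one, h0, h1]
  ring

lemma mobius_inv (a b c d : F) (hA : a * d - b * c ≠ 0) (g : ℕ) (p : F[X])
    (hp : p.natDegree ≤ g) :
    mobius d (-b) (-c) a g (mobius a b c d g p) = C ((a * d - b * c) ^ g) * p := by
  have hA' : d * a - (-b) * (-c) ≠ 0 := by
    intro h; apply hA; rw [← h]; ring
  have hXA : mobius d (-b) (-c) a 1 (C a * X + C b) = C (a * d - b * c) * X := by
    rw [mobius_linear]
    simp only [map_sub, map_mul, map_neg]
    ring
  have hXB : mobius d (-b) (-c) a 1 (C c * X + C d) = C (a * d - b * c) := by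
    rw [mobius_linear]
    simp only [map_sub, map_mul, map_neg]
    ring
  have hterm : ∀ i, i ≤ g → mobius d (-b) (-c) a g ((C a * X + C b) ^ i * (C c * X + C d) ^ (g - i))
      = C ((a * d - b * c) ^ g) * X ^ i := by
    intro i hi
    have hg : g = i + (g - i) := by omega
    have h1 : ((C a * X + C b : F[X]) ^ i).natDegree ≤ i :=
      le_trans natDegree_pow_le (by simpa using Nat.mul_le_mul_left i (natDegree_linear_le (a := a) (b := b)))
    have h2 : ((C c * X + C d : F[X]) ^ (g - i)).natDegree ≤ g - i :=
      le_trans natDegree_pow_le (by simpa using Nat.mul_le_mul_left (g - i) (natDegree_linear_le (a := c) (b := d)))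
    have hmm := mobius_mul d (-b) (-c) a hA' h1 h2
    rw [← hg] at hmm
    rw [hmm]
    have hp1 : mobius d (-b) (-c) a i ((C a * X + C b) ^ i)
        = (C (a * d - b * c) * X) ^ i := by
      have := mobius_pow d (-b) (-c) a hA' (k := 1) (p := C a * X + C b) natDegree_linear_le i
      rw [mul_one] at this; rw [this, hXA]
    have hp2 : mobius d (-b) (-c) a (g - i) ((C c * X + C d) ^ (g - i))
        = (C (a * d - b * c)) ^ (g - i) := by
      have := mobius_pow d (-b) (-c) a hA' (k := 1) (p := C c * X + C d) natDegree_linear_le (g - i)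
      rw [mul_one] at this; rw [this, hXB]
    rw [hp1, hp2, mul_pow, ← C_pow, ← C_pow]
    rw [mul_comm ((C ((a*d-b*c) ^ i) : F[X])) (X ^ i), mul_assoc, ← C_mul, ← pow_add]
    rw [show i + (g - i) = g from by omega]
    ring
  have hsum : mobius a b c d g p
      = ∑ i ∈ Finset.range (g + 1),
          C (p.coeff i) * ((C a * X + C b) ^ i * (C c * X + C d) ^ (g - i)) := by
    rw [mobius]; exact Finset.sum_congr rfl fun i _ => by ring
  rw [hsum, show (mobius d (-b) (-c) a g) (∑ i ∈ Finset.range (g + 1),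
      C (p.coeff i) * ((C a * X + C b) ^ i * (C c * X + C d) ^ (g - i)))
      = ∑ i ∈ Finset.range (g + 1), mobius d (-b) (-c) a g
        (C (p.coeff i) * ((C a * X + C b) ^ i * (C c * X + C d) ^ (g - i))) from
      map_sum (mobiusAH d (-b) (-c) a g) _ _]
  have : ∀ i ∈ Finset.range (g + 1),
      mobius d (-b) (-c) a g (C (p.coeff i) * ((C a * X + C b) ^ i * (C c * X + C d) ^ (g - i)))
        = C ((a * d - b * c) ^ g) * (C (p.coeff i) * X ^ i) := by
    intro i hi
    simp only [Finset.mem_range] at hi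
    rw [mobius_C_mul, hterm i (by omega)]
    ring
  rw [Finset.sum_congr rfl this, ← Finset.mul_sum]
  congr 1
  conv_rhs => rw [p.as_sum_range' (g + 1) (by omega)]
  exact Finset.sum_congr rfl fun i _ => C_mul_X_pow_eq_monomial

lemma mobius_eq_zero_iff (a b c d : F) (hA : a * d - b * c ≠ 0) {g : ℕ} {p : F[X]}
    (hp : p.natDegree ≤ g) : mobius a b c d g p = 0 ↔ p = 0 := by
  constructor
  · intro h
    have := mobius_inv a b c d hA g p hp
    rw [h, mobius_zero] at this
    have hC : (C ((a * d - b * c) ^ g) : F[X]) ≠ 0 :=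
      C_ne_zero.mpr (pow_ne_zero g hA)
    rcases mul_eq_zero.1 this.symm with h' | h'
    · exact absurd h' hC
    · exact h'
  · rintro rfl; exact mobius_zero a b c d g

lemma mobius_det (a b c d : F) (hA : a * d - b * c ≠ 0) {j : ℕ} (g : ℕ)
    (Q : Matrix (Fin j) (Fin j) F[X]) (hQ : ∀ i k, (Q i k).natDegree ≤ g) :
    (Matrix.of fun i k => mobius a b c d g (Q i k)).det = mobius a b c d (j * g) Q.det := by
  rw [Matrix.det_apply, Matrix.det_apply]
  rw [show (mobius a b c d (j * g)) (∑ σ : Equiv.Perm (Fin j),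
      Equiv.Perm.sign σ • ∏ i, Q (σ i) i)
      = ∑ σ : Equiv.Perm (Fin j), mobius a b c d (j * g)
        (Equiv.Perm.sign σ • ∏ i, Q (σ i) i) from
    map_sum (mobiusAH a b c d (j * g)) _ _]
  refine Finset.sum_congr rfl fun σ _ => ?_
  have hprod : mobius a b c d (j * g) (∏ i, Q (σ i) i)
      = ∏ i, mobius a b c d g (Q (σ i) i) := by
    have := mobius_prod a b c d hA Finset.univ (fun i => Q (σ i) i) (fun _ => g)
      (fun i _ => hQ _ _)
    simpa using this
  rw [Units.smul_def, Units.smul_def, show mobius a b c d (j * g)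
      ((Equiv.Perm.sign σ : ℤ) • ∏ i, Q (σ i) i)
      = (Equiv.Perm.sign σ : ℤ) • mobius a b c d (j * g) (∏ i, Q (σ i) i) from
    map_zsmul (mobiusAH a b c d (j * g)) _ _, hprod]
  rfl

lemma natDegree_det_le {j : ℕ} (g : ℕ) (Q : Matrix (Fin j) (Fin j) F[X])
    (hQ : ∀ i k, (Q i k).natDegree ≤ g) : Q.det.natDegree ≤ j * g := by
  rw [Matrix.det_apply]
  refine natDegree_sum_le_of_forall_le _ _ fun σ _ => ?_
  have hp : (∏ i, Q (σ i) i).natDegree ≤ j * g := by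
    refine le_trans (natDegree_prod_le _ _) ?_
    calc ∑ i : Fin j, (Q (σ i) i).natDegree ≤ ∑ _i : Fin j, g :=
          Finset.sum_le_sum fun i _ => hQ _ _
      _ = j * g := by simp [Finset.sum_const, mul_comm]
  rcases Int.units_eq_one_or (Equiv.Perm.sign σ) with h | h <;>
    rw [Units.smul_def, h] <;> simpa using hp

lemma mobius_assoc (a b c d : F) (hA : a * d - b * c ≠ 0) (χ : F[X]) (hχ : Irreducible χ)
    (hMχ : 0 < (mobius a b c d χ.natDegree χ).natDegree) :
    Associated χ
      (mobius d (-b) (-c) a (mobius a b c d χ.natDegree χ).natDegree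
        (mobius a b c d χ.natDegree χ)) := by
  have hA' : d * a - (-b) * (-c) ≠ 0 := by intro h; apply hA; rw [← h]; ring
  set n := χ.natDegree with hn
  set Mχ := mobius a b c d n χ with hMd
  set n' := Mχ.natDegree with hn'
  have hn'n : n' ≤ n := natDegree_mobius_le a b c d n χ
  have key : C ((a * d - b * c) ^ n) * χ
      = mobius d (-b) (-c) a n' Mχ * (C (-c) * X + C a) ^ (n - n') := by
    have h1 : mobius d (-b) (-c) a n Mχ = C ((a * d - b * c) ^ n) * χ :=
      mobius_inv a b c d hA n χ le_rfl
    have h2 := mobius_mul d (-b) (-c) a hA' (g1 := n') (g2 := n - n')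
      (p := Mχ) (q := 1) le_rfl (by simp)
    rw [mul_one, Nat.add_sub_cancel' hn'n] at h2
    rw [← h1, h2, mobius_one]
  have hpr : Prime χ := hχ.prime
  have hdvd : χ ∣ mobius d (-b) (-c) a n' Mχ * (C (-c) * X + C a) ^ (n - n') :=
    key ▸ dvd_mul_left χ (C ((a * d - b * c) ^ n))
  rcases hpr.2.2 _ _ hdvd with hu | hv
  · obtain ⟨w, hw⟩ := hu
    have hww : C ((a * d - b * c) ^ n) = w * (C (-c) * X + C a) ^ (n - n') := by
      have : χ * C ((a * d - b * c) ^ n) = χ * (w * (C (-c) * X + C a) ^ (n - n')) := by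
        rw [← mul_assoc, ← hw]
        rw [mul_comm χ (C ((a * d - b * c) ^ n))]
        exact key
      exact mul_left_cancel₀ hχ.ne_zero this
    have hwu : IsUnit w := by
      have : IsUnit (w * (C (-c) * X + C a) ^ (n - n')) := by
        rw [← hww]; exact isUnit_C.mpr (pow_ne_zero n hA).isUnit
      exact isUnit_of_mul_isUnit_left this
    rw [hw]
    exact (associated_mul_unit_left χ w hwu).symm
  · exfalso
    have hlin : χ ∣ (C (-c) * X + C a) := hpr.dvd_of_dvd_pow hv
    have hlin0 : (C (-c) * X + C a : F[X]) ≠ 0 := linear_ne_zero' d (-b) (-c) a hA'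
    have hd1 : n ≤ 1 := le_trans (natDegree_le_of_dvd hlin hlin0) natDegree_linear_le
    have : n - n' = 0 := by omega
    rw [this, pow_zero] at hv
    exact hχ.not_isUnit (isUnit_of_dvd_one hv)

lemma mobius_dvd_iff (a b c d : F) (hA : a * d - b * c ≠ 0) (χ : F[X]) (hχ : Irreducible χ)
    (hMχ : 0 < (mobius a b c d χ.natDegree χ).natDegree)
    {G t : ℕ} {q : F[X]} (hq : q.natDegree ≤ G) :
    χ ^ t ∣ q ↔ (mobius a b c d χ.natDegree χ) ^ t ∣ mobius a b c d G q := by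
  have hA' : d * a - (-b) * (-c) ≠ 0 := by intro h; apply hA; rw [← h]; ring
  set n := χ.natDegree with hn
  set Mχ := mobius a b c d n χ with hMd
  rcases eq_or_ne q 0 with rfl | hq0
  · exact iff_of_true (dvd_zero _) (by rw [mobius_zero]; exact dvd_zero _)
  constructor
  · rintro ⟨r, rfl⟩
    have hr0 : r ≠ 0 := right_ne_zero_of_mul hq0
    have hdq : (χ ^ t * r).natDegree = t * n + r.natDegree := by
      rw [natDegree_mul (pow_ne_zero _ hχ.ne_zero) hr0, natDegree_pow]
    have h1 : t * n ≤ G := by omega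
    have h2 : r.natDegree ≤ G - t * n := by omega
    have hmm := mobius_mul a b c d hA (g1 := t * n) (g2 := G - t * n)
      (p := χ ^ t) (q := r) (natDegree_pow χ t).le h2
    rw [Nat.add_sub_cancel' h1] at hmm
    rw [hmm, mobius_pow a b c d hA le_rfl t]
    exact dvd_mul_right _ _
  · rintro ⟨s, hs⟩
    set n' := Mχ.natDegree with hn'
    have hQ0 : mobius a b c d G q ≠ 0 :=
      fun h0 => hq0 ((mobius_eq_zero_iff a b c d hA hq).1 h0)
    have hMχ0 : Mχ ≠ 0 := fun h0 => by
      have hz : n' = 0 := by rw [hn', h0, natDegree_zero]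
      omega
    have hs0 : s ≠ 0 := by rintro rfl; rw [mul_zero] at hs; exact hQ0 hs
    have hdeg2 : t * n' + s.natDegree ≤ G := by
      have h3 := natDegree_mobius_le a b c d G q
      rw [hs, natDegree_mul (pow_ne_zero _ hMχ0) hs0, natDegree_pow] at h3
      exact h3
    have hmm := mobius_mul d (-b) (-c) a hA' (g1 := t * n') (g2 := G - t * n')
      (p := Mχ ^ t) (q := s) (natDegree_pow Mχ t).le (by omega)
    rw [Nat.add_sub_cancel' (by omega : t * n' ≤ G)] at hmm
    rw [← hs, mobius_inv a b c d hA G q hq,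
      mobius_pow d (-b) (-c) a hA' le_rfl t] at hmm
    have hassoc := mobius_assoc a b c d hA χ hχ hMχ
    have hdvd : χ ^ t ∣ C ((a * d - b * c) ^ G) * q := by
      rw [hmm]
      exact dvd_mul_of_dvd_left (hassoc.pow_pow (n := t)).dvd _
    have hu : IsUnit (C ((a * d - b * c) ^ G) : F[X]) :=
      isUnit_C.mpr (pow_ne_zero G hA).isUnit
    exact (hu.dvd_mul_left).mp hdvd

end MobiusAux

/-- `D_j(P)`: a gcd of the determinants of all `j × j` submatrices of `P`. -/
noncomputable def minorGcd {F : Type*} [Field F] {m n : ℕ} (j : ℕ)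
    (P : Matrix (Fin m) (Fin n) F[X]) : F[X] :=
  letI := Classical.decEq F
  Finset.univ.gcd fun fg : (Fin j → Fin m) × (Fin j → Fin n) => (P.submatrix fg.1 fg.2).det

/-- The multiplicity of `f` in `h`: the largest `t` with `f ^ t ∣ h`. -/
noncomputable def polyMult {F : Type*} [Field F] (f h : F[X]) : ℕ :=
  sSup {t : ℕ | f ^ t ∣ h}

namespace MobiusAux

lemma dvd_minorGcd_iff {F : Type*} [Field F] {m n : ℕ} {j : ℕ} (x : F[X])
    (P : Matrix (Fin m) (Fin n) F[X]) :
    x ∣ minorGcd j P ↔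
      ∀ fg : (Fin j → Fin m) × (Fin j → Fin n), x ∣ (P.submatrix fg.1 fg.2).det := by
  letI := Classical.decEq F
  unfold minorGcd
  exact ⟨fun h fg => h.trans (Finset.gcd_dvd (Finset.mem_univ fg)),
    fun h => Finset.dvd_gcd fun fg _ => h fg⟩

end MobiusAux

open MobiusAux in
theorem statement_14 {F : Type*} [Field F] {m n : ℕ}
    (P : Matrix (Fin m) (Fin n) F[X]) (g : ℕ)
    (hdeg : ∀ i j, (P i j).degree ≤ (g : WithBot ℕ))
    (a b c d : F) (hA : a * d - b * c ≠ 0)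
    (χ : F[X]) (hχ : Irreducible χ)
    (hMχ : 0 < (mobius a b c d χ.natDegree χ).natDegree) :
    ∀ j : ℕ, 1 ≤ j → j ≤ m → j ≤ n →
      ((∃ (r : Fin j → Fin m) (cc : Fin j → Fin n), (P.submatrix r cc).det ≠ 0) ↔
        (∃ (r : Fin j → Fin m) (cc : Fin j → Fin n),
          ((Matrix.of fun i j' => mobius a b c d g (P i j')).submatrix r cc).det ≠ 0)) ∧
      ((∃ (r : Fin j → Fin m) (cc : Fin j → Fin n), (P.submatrix r cc).det ≠ 0) →
        polyMult χ (minorGcd j P)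
          = polyMult (mobius a b c d χ.natDegree χ)
              (minorGcd j (Matrix.of fun i j' => mobius a b c d g (P i j')))) := by
  intro j hj1 hjm hjn
  have hdeg' : ∀ i k, (P i k).natDegree ≤ g := fun i k =>
    natDegree_le_iff_degree_le.2 (hdeg i k)
  have hdet : ∀ (r : Fin j → Fin m) (cc : Fin j → Fin n),
      ((Matrix.of fun i j' => mobius a b c d g (P i j')).submatrix r cc).det
        = mobius a b c d (j * g) ((P.submatrix r cc).det) := fun r cc =>
    mobius_det a b c d hA g (P.submatrix r cc) (fun i k => hdeg' _ _)
  have hdd : ∀ (r : Fin j → Fin m) (cc : Fin j → Fin n),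
      ((P.submatrix r cc).det).natDegree ≤ j * g := fun r cc =>
    natDegree_det_le g _ (fun i k => hdeg' _ _)
  refine ⟨⟨?_, ?_⟩, fun _ => ?_⟩
  · rintro ⟨r, cc, h⟩
    refine ⟨r, cc, ?_⟩
    rw [hdet r cc]
    exact fun h0 => h ((mobius_eq_zero_iff a b c d hA (hdd r cc)).1 h0)
  · rintro ⟨r, cc, h⟩
    refine ⟨r, cc, fun h0 => h ?_⟩
    rw [hdet r cc, h0, mobius_zero]
  · unfold polyMult
    congr 1
    ext t
    simp only [Set.mem_setOf_eq]
    rw [dvd_minorGcd_iff, dvd_minorGcd_iff]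
    constructor
    · intro ht fg
      have h1 := (mobius_dvd_iff a b c d hA χ hχ hMχ (hdd fg.1 fg.2)).1 (ht fg)
      rw [← hdet fg.1 fg.2] at h1
      exact h1
    · intro ht fg
      have h1 := ht fg
      rw [hdet fg.1 fg.2] at h1
      exact (mobius_dvd_iff a b c d hA χ hχ hMχ (hdd fg.1 fg.2)).2 h1
end

section
/- Let F be a field, T a regular n×n upper triangular matrix polynomial over F, and s_1, …, s_n monic polynomials in F[λ] with s_i dividing s_{i+1} for 1 ≤ i < n, such that T is unimodularly equivalent to diag(s_1, …, s_n). Let 𝒮 be any set of monic irreducible polynomials in F[λ], and for a nonzero p ∈ F[λ] let c_𝒮(p) denote the number of irreducible factors of p, counted with multiplicity, whose normalized (monic) form lies in 𝒮. Then the vector (c_𝒮(s_1), …, c_𝒮(s_n)) majorizes the vector (c_𝒮(T_{11}), …, c_𝒮(T_{nn})). -/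
open Polynomial

/-- `x` majorizes `y`: after rearranging each vector in decreasing order, every
partial sum of `x` dominates the corresponding partial sum of `y`, with equal totals. -/
def MajorizesInt {n : ℕ} (x y : Fin n → ℤ) : Prop :=
  ∃ σ τ : Equiv.Perm (Fin n),
    (∀ i j : Fin n, i ≤ j → x (σ j) ≤ x (σ i)) ∧
    (∀ i j : Fin n, i ≤ j → y (τ j) ≤ y (τ i)) ∧
    (∀ ℓ : ℕ,
      ∑ i ∈ Finset.univ.filter (fun i : Fin n => (i : ℕ) < ℓ), y (τ i)
        ≤ ∑ i ∈ Finset.univ.filter (fun i : Fin n => (i : ℕ) < ℓ), x (σ i)) ∧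
    (∑ i, x i = ∑ i, y i)

/-- `c_𝒮(p)`: the number of irreducible factors of `p`, counted with multiplicity,
whose normalized (monic) form lies in `S`. -/
noncomputable def countIn {F : Type*} [Field F] (S : Set F[X]) (p : F[X]) : ℕ :=
  letI := Classical.decEq F
  letI := Classical.decPred fun q : F[X] => q ∈ S
  Multiset.countP (fun q => q ∈ S) (UniqueFactorizationMonoid.normalizedFactors p)

section Aux

open UniqueFactorizationMonoid Matrix

variable {F : Type*} [Field F] (S : Set F[X])

lemma countIn_mul {p q : F[X]} (hp : p ≠ 0) (hq : q ≠ 0) :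
    countIn S (p * q) = countIn S p + countIn S q := by
  letI := Classical.decEq F
  letI := Classical.decPred fun q : F[X] => q ∈ S
  simp only [countIn, normalizedFactors_mul hp hq, Multiset.countP_add]

lemma countIn_le_of_dvd {p q : F[X]} (hq : q ≠ 0) (h : p ∣ q) :
    countIn S p ≤ countIn S q := by
  have hp : p ≠ 0 := fun h0 => hq (by simpa [h0] using h)
  letI := Classical.decEq F
  letI := Classical.decPred fun q : F[X] => q ∈ S
  simp only [countIn]
  exact Multiset.countP_le_of_le _
    ((dvd_iff_normalizedFactors_le_normalizedFactors hp hq).mp h)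

lemma countIn_eq_of_associated {p q : F[X]} (hp : p ≠ 0) (hq : q ≠ 0)
    (h : Associated p q) : countIn S p = countIn S q := by
  letI := Classical.decEq F
  letI := Classical.decPred fun q : F[X] => q ∈ S
  simp only [countIn,
    (associated_iff_normalizedFactors_eq_normalizedFactors hp hq).mp h]

lemma countIn_prod {ι : Type*} (t : Finset ι) (p : ι → F[X]) (h : ∀ i ∈ t, p i ≠ 0) :
    countIn S (∏ i ∈ t, p i) = ∑ i ∈ t, countIn S (p i) := by
  classical
  induction t using Finset.cons_induction with
  | empty => simp [countIn]
  | cons a t ha ih =>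
    rw [Finset.prod_cons, Finset.sum_cons,
      countIn_mul S (h a (Finset.mem_cons_self a t))
        (Finset.prod_ne_zero_iff.mpr fun i hi => h i (Finset.mem_cons_of_mem hi)),
      ih fun i hi => h i (Finset.mem_cons_of_mem hi)]

lemma det_mul_submatrix {R : Type*} [CommRing R] {m n : ℕ}
    (A M : Matrix (Fin n) (Fin n) R) (f g : Fin m → Fin n) :
    ((A * M).submatrix f g).det
      = ∑ φ : Fin m → Fin n, (∏ k, A (f k) (φ k)) * (M.submatrix φ g).det := by
  have h1 : ((A * M).submatrix f g : Matrix (Fin m) (Fin m) R)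
      = fun k => ∑ j : Fin n, A (f k) j • (fun j' : Fin m => M j (g j')) := by
    funext k j'
    simp [Matrix.submatrix_apply, Matrix.mul_apply]
  have h2 : ((A * M).submatrix f g).det
      = Matrix.detRowAlternating
        (fun k => ∑ j : Fin n, A (f k) j • (fun j' : Fin m => M j (g j'))) := by
    rw [← h1]
    rfl
  rw [h2]
  have h3 := (Matrix.detRowAlternating :
      AlternatingMap R (Fin m → R) R (Fin m)).toMultilinearMap.map_sum
    (α := fun _ : Fin m => Fin n)
    (g := fun k j => A (f k) j • (fun j' : Fin m => M j (g j')))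
  refine h3.trans ?_
  refine Finset.sum_congr rfl fun φ _ => ?_
  have h4 := (Matrix.detRowAlternating :
      AlternatingMap R (Fin m → R) R (Fin m)).toMultilinearMap.map_smul_univ
    (fun k => A (f k) (φ k)) (fun k => (fun j' : Fin m => M (φ k) (g j')))
  refine h4.trans ?_
  rw [smul_eq_mul]
  rfl

lemma fin_strictMono_le {m n : ℕ} {e : Fin m → Fin n} (he : StrictMono e) (k : Fin m) :
    (k : ℕ) ≤ (e k : ℕ) := by
  obtain ⟨v, hv⟩ := k
  induction v with
  | zero => exact Nat.zero_le _
  | succ v ih =>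
    have hv' : v < m := Nat.lt_of_succ_lt hv
    have h1 : e ⟨v, hv'⟩ < e ⟨v + 1, hv⟩ := he (by simp [Fin.lt_def])
    have h2 := ih hv'
    rw [Fin.lt_def] at h1
    simp only [Fin.val_mk] at h1 h2 ⊢
    omega

lemma image_orderEmbOfFin {n m : ℕ} (J : Finset (Fin n)) (h : J.card = m) :
    Finset.image (fun k => (J.orderEmbOfFin h k : Fin n)) Finset.univ = J := by
  apply Finset.eq_of_subset_of_card_le
  · intro x hx
    simp only [Finset.mem_image] at hx
    obtain ⟨k, _, rfl⟩ := hx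
    exact Finset.orderEmbOfFin_mem J h k
  · rw [h, Finset.card_image_of_injective _ (J.orderEmbOfFin h).injective,
      Finset.card_univ, Fintype.card_fin]

@[to_additive]
lemma prod_eq_prod_orderEmbOfFin {M : Type*} [CommMonoid M] {n m : ℕ}
    (J : Finset (Fin n)) (h : J.card = m) (y : Fin n → M) :
    ∏ j ∈ J, y j = ∏ k : Fin m, y (J.orderEmbOfFin h k) := by
  conv_lhs => rw [← image_orderEmbOfFin J h]
  exact Finset.prod_image (fun a _ b _ hab => (J.orderEmbOfFin h).injective hab)

lemma filter_lt_eq_map {n L : ℕ} (hLn : L ≤ n) :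
    Finset.univ.filter (fun i : Fin n => (i : ℕ) < L)
      = Finset.map (Fin.castLEEmb hLn) Finset.univ := by
  ext i
  simp only [Finset.mem_filter, Finset.mem_univ, true_and, Finset.mem_map,
    Fin.coe_castLEEmb, true_and]
  constructor
  · intro hi
    exact ⟨⟨(i : ℕ), hi⟩, by apply Fin.ext; simp⟩
  · rintro ⟨k, -, rfl⟩
    simpa using k.isLt

lemma prod_dvd_of_injective {m n : ℕ} (hmn : m ≤ n)
    (s : Fin n → F[X]) (hdvd : ∀ j k : Fin n, j ≤ k → s j ∣ s k)
    {φ : Fin m → Fin n} (hφ : Function.Injective φ) :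
    (∏ k : Fin m, s (Fin.castLE hmn k)) ∣ ∏ k : Fin m, s (φ k) := by
  classical
  set I : Finset (Fin n) := Finset.image φ Finset.univ with hI
  have hcard : I.card = m := by
    rw [hI, Finset.card_image_of_injective _ hφ, Finset.card_univ, Fintype.card_fin]
  set e := I.orderEmbOfFin hcard with he
  have h1 : ∏ k : Fin m, s (φ k) = ∏ k : Fin m, s (e k) := by
    rw [← Finset.prod_image (f := s) (fun x _ y _ h => hφ h), ← hI,
      prod_eq_prod_orderEmbOfFin I hcard s]
  rw [h1]
  refine Finset.prod_dvd_prod_of_dvd _ _ fun k _ => ?_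
  refine hdvd _ _ ?_
  rw [Fin.le_def]
  exact (fin_strictMono_le e.strictMono k).trans_eq' rfl

lemma dvd_det_submatrix' {m n : ℕ} (hmn : m ≤ n)
    (s : Fin n → F[X]) (hdvd : ∀ j k : Fin n, j ≤ k → s j ∣ s k)
    (A B : Matrix (Fin n) (Fin n) F[X]) (f g : Fin m → Fin n) :
    (∏ k : Fin m, s (Fin.castLE hmn k))
      ∣ ((A * (Matrix.diagonal s * B)).submatrix f g).det := by
  rw [det_mul_submatrix]
  refine Finset.dvd_sum fun φ _ => ?_
  by_cases hφ : Function.Injective φ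
  · have hsub : (Matrix.diagonal s * B).submatrix φ g
        = Matrix.diagonal (s ∘ φ) * (B.submatrix φ g) := by
      ext k j'
      simp [Matrix.submatrix_apply, Matrix.diagonal_mul, Function.comp]
    rw [hsub, Matrix.det_mul, Matrix.det_diagonal]
    exact Dvd.dvd.mul_left
      ((prod_dvd_of_injective hmn s hdvd hφ).trans (dvd_mul_right _ _)) _
  · obtain ⟨i, j, hij, hne⟩ : ∃ i j, φ i = φ j ∧ i ≠ j := by
      rw [Function.Injective] at hφ
      push_neg at hφ
      obtain ⟨i, j, h1, h2⟩ := hφ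
      exact ⟨i, j, h1, h2⟩
    have hz : ((Matrix.diagonal s * B).submatrix φ g).det = 0 :=
      Matrix.det_zero_of_row_eq hne (by funext j'; simp [Matrix.submatrix_apply, hij])
    simp [hz]

end Aux

theorem statement_17 {F : Type*} [Field F] {n : ℕ}
    (T : Matrix (Fin n) (Fin n) F[X])
    (hreg : T.det ≠ 0)
    (hupper : ∀ i j : Fin n, j < i → T i j = 0)
    (s : Fin n → F[X]) (hmonic : ∀ i, (s i).Monic)
    (hchain : ∀ (i : Fin n) (h : (i : ℕ) + 1 < n), s i ∣ s ⟨(i : ℕ) + 1, h⟩)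
    (hequiv : UnimodEquiv T (Matrix.diagonal s))
    (S : Set F[X]) (hS : ∀ q ∈ S, q.Monic ∧ Irreducible q) :
    MajorizesInt (fun i => (countIn S (s i) : ℤ)) (fun i => (countIn S (T i i) : ℤ)) := by
  classical
  have hsne : ∀ i, s i ≠ 0 := fun i => (hmonic i).ne_zero
  have hdetT : T.det = ∏ i, T i i :=
    Matrix.det_of_upperTriangular (fun i j hij => hupper i j hij)
  have hTne : ∀ i, T i i ≠ 0 := by
    intro i h0
    exact hreg (hdetT.trans (Finset.prod_eq_zero (Finset.mem_univ i) h0))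
  -- divisibility chain
  have hdvds : ∀ j k : Fin n, j ≤ k → s j ∣ s k := by
    have H : ∀ d (jv : ℕ) (h : jv + d < n), s ⟨jv, by omega⟩ ∣ s ⟨jv + d, h⟩ := by
      intro d
      induction d with
      | zero => intro jv h; exact dvd_refl _
      | succ d ih =>
        intro jv h
        have h1 : jv + d < n := by omega
        exact (ih jv h1).trans (hchain ⟨jv + d, h1⟩ h)
    intro j k hjk
    obtain ⟨jv, hj⟩ := j
    obtain ⟨kv, hk⟩ := k
    have hle : jv ≤ kv := hjk
    have hkeq : (⟨kv, hk⟩ : Fin n) = ⟨jv + (kv - jv), by omega⟩ :=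
      Fin.mk_eq_mk.mpr (by omega)
    rw [hkeq]
    exact H (kv - jv) jv (by omega)
  -- decompose T
  obtain ⟨U, V, hU, hV, hQ⟩ := hequiv
  have hT : T = U⁻¹ * (Matrix.diagonal s * V⁻¹) := by
    have h1 : U⁻¹ * Matrix.diagonal s * V⁻¹ = U⁻¹ * (U * T * V) * V⁻¹ := by rw [← hQ]
    rw [Matrix.mul_assoc U T V, ← Matrix.mul_assoc U⁻¹ U (T * V),
      Matrix.nonsing_inv_mul U hU, Matrix.one_mul, Matrix.mul_assoc T V V⁻¹,
      Matrix.mul_nonsing_inv V hV, Matrix.mul_one] at h1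
    rw [← h1, Matrix.mul_assoc]
  -- total equality of counts
  have htot : ∑ i, countIn S (T i i) = ∑ i, countIn S (s i) := by
    have hdets : (∏ i, s i) = U.det * T.det * V.det := by
      rw [← Matrix.det_diagonal, hQ, Matrix.det_mul, Matrix.det_mul]
    have hassoc : Associated T.det (∏ i, s i) := by
      rw [hdets]
      have : U.det * T.det * V.det = T.det * (U.det * V.det) := by ring
      rw [this]
      exact (associated_mul_unit_left T.det _ (hU.mul hV)).symm
    have h2 : countIn S T.det = countIn S (∏ i, s i) :=
      countIn_eq_of_associated S hreg (Finset.prod_ne_zero_iff.mpr fun i _ => hsne i)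
        hassoc
    rw [hdetT] at h2
    rw [← countIn_prod S Finset.univ _ (fun i _ => hTne i), h2,
      countIn_prod S Finset.univ _ (fun i _ => hsne i)]
  -- key inequality
  have key : ∀ (m : ℕ) (hmn : m ≤ n) (f : Fin m → Fin n), StrictMono f →
      ∑ k : Fin m, countIn S (s (Fin.castLE hmn k))
        ≤ ∑ k : Fin m, countIn S (T (f k) (f k)) := by
    intro m hmn f hf
    have h1 : (∏ k : Fin m, s (Fin.castLE hmn k)) ∣ ∏ k : Fin m, T (f k) (f k) := by
      have h2 := dvd_det_submatrix' hmn s hdvds U⁻¹ V⁻¹ f f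
      rw [← hT] at h2
      have h3 : (T.submatrix f f).det = ∏ k, T (f k) (f k) :=
        Matrix.det_of_upperTriangular (fun i j hij => hupper _ _ (hf hij))
      rwa [h3] at h2
    have h4 := countIn_le_of_dvd S
      (Finset.prod_ne_zero_iff.mpr fun k _ => hTne (f k)) h1
    rwa [countIn_prod S Finset.univ _ (fun k _ => hsne _),
      countIn_prod S Finset.univ _ (fun k _ => hTne _)] at h4
  -- set up vectors and permutations
  set x : Fin n → ℤ := fun i => (countIn S (s i) : ℤ) with hx
  set y : Fin n → ℤ := fun i => (countIn S (T i i) : ℤ) with hy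
  have hxmono : ∀ i j : Fin n, i ≤ j → x i ≤ x j := fun i j h =>
    Int.ofNat_le.mpr (countIn_le_of_dvd S (hsne j) (hdvds i j h))
  refine ⟨Fin.revPerm, (Fin.revPerm).trans (Tuple.sort y), ?_, ?_, ?_, ?_⟩
  · intro i j hij
    exact hxmono _ _ (Fin.rev_le_rev.mpr hij)
  · intro i j hij
    exact Tuple.monotone_sort y (Fin.rev_le_rev.mpr hij)
  · intro ℓ
    set L := min ℓ n with hL
    have hLn : L ≤ n := min_le_right _ _
    have hfilter : ∀ z : Fin n → ℤ,
        ∑ i ∈ Finset.univ.filter (fun i : Fin n => (i : ℕ) < ℓ), z i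
          = ∑ i ∈ Finset.univ.filter (fun i : Fin n => (i : ℕ) < L), z i := by
      intro z
      congr 1
      ext i
      simp only [Finset.mem_filter, Finset.mem_univ, true_and]
      have := i.isLt
      omega
    rw [hfilter, hfilter]
    set m := n - L with hm
    have hmn : m ≤ n := Nat.sub_le _ _
    -- RHS rewriting: reversal
    have hRHS : ∑ i ∈ Finset.univ.filter (fun i : Fin n => (i : ℕ) < L),
        x (Fin.revPerm i)
        = ∑ j ∈ Finset.univ.filter (fun j : Fin n => ¬ (j : ℕ) < m), x j := by
      refine Finset.sum_nbij' (fun i => Fin.rev i) (fun j => Fin.rev j) ?_ ?_ ?_ ?_ ?_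
      · intro i hi
        simp only [Finset.mem_filter, Finset.mem_univ, true_and] at hi ⊢
        have h1 := i.isLt
        simp only [Fin.val_rev]
        omega
      · intro j hj
        simp only [Finset.mem_filter, Finset.mem_univ, true_and] at hj ⊢
        have h1 := j.isLt
        simp only [Fin.val_rev] at hj ⊢
        omega
      · intro i _; exact Fin.rev_rev i
      · intro j _; exact Fin.rev_rev j
      · intro i _; rfl
    rw [hRHS]
    -- complement trick
    have hsplit1 := Finset.sum_filter_add_sum_filter_not Finset.univ
      (fun i : Fin n => (i : ℕ) < L) (fun i => y ((Fin.revPerm.trans (Tuple.sort y)) i))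
    have hsplit2 := Finset.sum_filter_add_sum_filter_not Finset.univ
      (fun j : Fin n => (j : ℕ) < m) x
    have htotxy : ∑ i, x i = ∑ i, y i := by
      simp only [hx, hy]
      rw [← Nat.cast_sum, ← Nat.cast_sum, htot]
    have htoty : ∑ i, y ((Fin.revPerm.trans (Tuple.sort y)) i) = ∑ i, y i :=
      Equiv.sum_comp _ y
    -- main: ∑_{j<m} x j ≤ ∑_{¬(i<L)} y (τ i)
    have hmain : ∑ j ∈ Finset.univ.filter (fun j : Fin n => (j : ℕ) < m), x j
        ≤ ∑ i ∈ Finset.univ.filter (fun i : Fin n => ¬ (i : ℕ) < L),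
            y ((Fin.revPerm.trans (Tuple.sort y)) i) := by
      set τ : Equiv.Perm (Fin n) := Fin.revPerm.trans (Tuple.sort y) with hτ
      set Jf : Finset (Fin n) :=
        Finset.image (fun i => τ i)
          (Finset.univ.filter (fun i : Fin n => ¬ (i : ℕ) < L)) with hJ
      have hcL : (Finset.univ.filter (fun i : Fin n => (i : ℕ) < L)).card = L := by
        rw [filter_lt_eq_map hLn, Finset.card_map, Finset.card_univ, Fintype.card_fin]
      have hcardfil : (Finset.univ.filter (fun i : Fin n => ¬ (i : ℕ) < L)).card = m := by
        have h0 := Finset.card_filter_add_card_filter_not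
          (s := (Finset.univ : Finset (Fin n))) (p := fun i : Fin n => (i : ℕ) < L)
        rw [hcL, Finset.card_univ, Fintype.card_fin] at h0
        omega
      have hJcard : Jf.card = m := by
        rw [hJ, Finset.card_image_of_injective _ τ.injective, hcardfil]
      set f := Jf.orderEmbOfFin hJcard with hf
      have hRHS2 : ∑ i ∈ Finset.univ.filter (fun i : Fin n => ¬ (i : ℕ) < L), y (τ i)
          = ∑ k : Fin m, y (f k) := by
        rw [← Finset.sum_image (g := fun i => τ i) (f := y)
            (fun a _ b _ hab => τ.injective hab), ← hJ,
          sum_eq_sum_orderEmbOfFin Jf hJcard y]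
      have hLHS2 : ∑ j ∈ Finset.univ.filter (fun j : Fin n => (j : ℕ) < m), x j
          = ∑ k : Fin m, x (Fin.castLE hmn k) := by
        rw [filter_lt_eq_map hmn, Finset.sum_map]
        rfl
      rw [hRHS2, hLHS2]
      have hkey := key m hmn (fun k => f k) f.strictMono
      have : ((∑ k : Fin m, countIn S (s (Fin.castLE hmn k)) : ℕ) : ℤ)
          ≤ ((∑ k : Fin m, countIn S (T (f k) (f k)) : ℕ) : ℤ) := Int.ofNat_le.mpr hkey
      rw [Nat.cast_sum, Nat.cast_sum] at this
      exact this
    linarith [hsplit1, hsplit2, htotxy, htoty, hmain]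
  · simp only [hx, hy]
    rw [← Nat.cast_sum, ← Nat.cast_sum, htot]
end
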